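/- In the abstract Picard–Fuchs setting, assume additionally that for every t ∈ U the 2N functions on V given by h ↦ h^{−1}·∂_cΨ(t,h) and h ↦ h^{−2}·∂_cΨ(t,h) (c ∈ Fin N) are linearly independent over ℂ. Then everywhere on U: (i) A^c_{ab} = A^c_{ba} for all a, b, c (commutativity); (ii) ∂_d A^c_{ab} = ∂_a A^c_{db} for all a, b, c, d (closedness of the matrix-valued 1-form A = Σ_a A^c_{ab} dt^a, i.e. dA = 0); and (iii) Σ_e A^e_{ab}·A^c_{de} = Σ_e A^e_{db}·A^c_{ae} for all a, b, c, d (i.e. [A,A] = 0: the product ∂_a ∘ ∂_b := Σ_c A^c_{ab}·∂_c on tangent vectors is associative). -/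

import Mathlib

open Complex
open scoped ContDiff

/-- Partial derivative `∂_aΨ(t,h)` of `Ψ : ℂ^N × ℂ → ℂ^M` in the `a`-th coordinate
direction of `ℂ^N`. -/
noncomputable def pdt {N M : ℕ} (Ψ : (Fin N → ℂ) → ℂ → (Fin M → ℂ)) (a : Fin N)
    (t : Fin N → ℂ) (h : ℂ) : Fin M → ℂ :=
  deriv (fun z : ℂ => Ψ (Function.update t a z) h) (t a)

/-- Partial derivative `∂_hΨ(t,h)` in the `ℂ`-direction. -/
noncomputable def pdh {N M : ℕ} (Ψ : (Fin N → ℂ) → ℂ → (Fin M → ℂ))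
    (t : Fin N → ℂ) (h : ℂ) : Fin M → ℂ :=
  deriv (Ψ t) h

/-- Partial derivative `∂_aφ(t)` of a scalar function `φ : ℂ^N → ℂ` in the `a`-th
coordinate direction. -/
noncomputable def pdS {N : ℕ} (a : Fin N) (φ : (Fin N → ℂ) → ℂ) (t : Fin N → ℂ) : ℂ :=
  deriv (fun z : ℂ => φ (Function.update t a z)) (t a)

section PFAux

variable {N : ℕ} {E : Type*} [NormedAddCommGroup E] [NormedSpace ℂ E]

/-- Coordinate directional derivative of a function on `ℂ^N`. -/
noncomputable def Dcoord (G : (Fin N → ℂ) → E) (a : Fin N) (s : Fin N → ℂ) : E :=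
  deriv (fun z : ℂ => G (Function.update s a z)) (s a)

theorem hasDerivAt_coord (a : Fin N) {G : (Fin N → ℂ) → E} {s : Fin N → ℂ}
    (hdiff : DifferentiableAt ℂ G s) :
    HasDerivAt (fun z : ℂ => G (Function.update s a z))
      (fderiv ℂ G s (Pi.single a 1)) (s a) := by
  have h1 : HasDerivAt (Function.update s a) (Pi.single a (1 : ℂ)) (s a) :=
    hasDerivAt_update s a (s a)
  have h2 : HasFDerivAt G (fderiv ℂ G s) (Function.update s a (s a)) := by
    rw [Function.update_eq_self]; exact hdiff.hasFDerivAt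
  exact h2.comp_hasDerivAt (s a) h1

theorem Dcoord_eq (a : Fin N) {G : (Fin N → ℂ) → E} {s : Fin N → ℂ}
    (hdiff : DifferentiableAt ℂ G s) :
    Dcoord G a s = fderiv ℂ G s (Pi.single a 1) :=
  (hasDerivAt_coord a hdiff).deriv

theorem eventually_update_mem {U : Set (Fin N → ℂ)} (hU : IsOpen U) {t : Fin N → ℂ}
    (ht : t ∈ U) (d : Fin N) :
    ∀ᶠ z in nhds (t d), Function.update t d z ∈ U := by
  have hc : ContinuousAt (fun z : ℂ => Function.update t d z) (t d) :=
    (hasDerivAt_update t d (t d)).continuousAt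
  have hmem : U ∈ nhds (Function.update t d (t d)) := by
    rw [Function.update_eq_self]; exact hU.mem_nhds ht
  exact hc.preimage_mem_nhds hmem

theorem one_le_infty' : (1 : WithTop ℕ∞) ≤ ∞ := by
  exact_mod_cast (le_top : (1 : ℕ∞) ≤ ⊤)

theorem two_le_infty' : (2 : WithTop ℕ∞) ≤ ∞ := by decide

variable {U : Set (Fin N → ℂ)}

theorem contDiffOn_fderiv_apply (hU : IsOpen U) {G : (Fin N → ℂ) → E}
    (hG : ContDiffOn ℂ ∞ G U) (v : Fin N → ℂ) :
    ContDiffOn ℂ ∞ (fun s => fderiv ℂ G s v) U := by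
  have h1 : ContDiffOn ℂ ∞ (fderiv ℂ G) U :=
    hG.fderiv_of_isOpen hU (le_of_eq rfl)
  exact (ContinuousLinearMap.apply ℂ E v).contDiff.comp_contDiffOn h1

theorem differentiableAt_of_contDiffOn (hU : IsOpen U) {G : (Fin N → ℂ) → E}
    (hG : ContDiffOn ℂ ∞ G U) {s : Fin N → ℂ} (hs : s ∈ U) :
    DifferentiableAt ℂ G s :=
  (hG.contDiffAt (hU.mem_nhds hs)).differentiableAt (by simp)

theorem contDiffOn_Dcoord (hU : IsOpen U) {G : (Fin N → ℂ) → E}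
    (hG : ContDiffOn ℂ ∞ G U) (a : Fin N) :
    ContDiffOn ℂ ∞ (Dcoord G a) U :=
  (contDiffOn_fderiv_apply hU hG (Pi.single a 1)).congr fun _ hs =>
    Dcoord_eq a (differentiableAt_of_contDiffOn hU hG hs)

theorem Dcoord_Dcoord_eq (hU : IsOpen U) {G : (Fin N → ℂ) → E}
    (hG : ContDiffOn ℂ ∞ G U) (c d : Fin N) {t : Fin N → ℂ} (ht : t ∈ U) :
    Dcoord (Dcoord G c) d t
      = fderiv ℂ (fun s => fderiv ℂ G s (Pi.single c 1)) t (Pi.single d 1) := by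
  have hev : (fun z : ℂ => Dcoord G c (Function.update t d z))
      =ᶠ[nhds (t d)] fun z => fderiv ℂ G (Function.update t d z) (Pi.single c 1) := by
    filter_upwards [eventually_update_mem hU ht d] with z hz
    exact Dcoord_eq c (differentiableAt_of_contDiffOn hU hG hz)
  have hdiff : DifferentiableAt ℂ (fun s => fderiv ℂ G s (Pi.single c 1)) t :=
    differentiableAt_of_contDiffOn hU (contDiffOn_fderiv_apply hU hG (Pi.single c 1)) ht
  have h0 := hasDerivAt_coord d hdiff
  have : Dcoord (Dcoord G c) d t
      = deriv (fun z : ℂ => fderiv ℂ G (Function.update t d z) (Pi.single c 1)) (t d) :=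
    Filter.EventuallyEq.deriv_eq hev
  rw [this, h0.deriv]

theorem hasDerivAt_Dcoord (hU : IsOpen U) {G : (Fin N → ℂ) → E}
    (hG : ContDiffOn ℂ ∞ G U) (c d : Fin N) {t : Fin N → ℂ} (ht : t ∈ U) :
    HasDerivAt (fun z : ℂ => Dcoord G c (Function.update t d z))
      (Dcoord (Dcoord G c) d t) (t d) := by
  have hev : (fun z : ℂ => Dcoord G c (Function.update t d z))
      =ᶠ[nhds (t d)] fun z => fderiv ℂ G (Function.update t d z) (Pi.single c 1) := by
    filter_upwards [eventually_update_mem hU ht d] with z hz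
    exact Dcoord_eq c (differentiableAt_of_contDiffOn hU hG hz)
  have hdiff : DifferentiableAt ℂ (fun s => fderiv ℂ G s (Pi.single c 1)) t :=
    differentiableAt_of_contDiffOn hU (contDiffOn_fderiv_apply hU hG (Pi.single c 1)) ht
  have h0 := hasDerivAt_coord d hdiff
  rw [Dcoord_Dcoord_eq hU hG c d ht]
  exact h0.congr_of_eventuallyEq hev

theorem Dcoord_symm (hU : IsOpen U) {G : (Fin N → ℂ) → E}
    (hG : ContDiffOn ℂ ∞ G U) (a b : Fin N) {t : Fin N → ℂ} (ht : t ∈ U) :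
    Dcoord (Dcoord G b) a t = Dcoord (Dcoord G a) b t := by
  have key : ∀ v w : Fin N → ℂ,
      fderiv ℂ (fun s => fderiv ℂ G s v) t w = fderiv ℂ (fderiv ℂ G) t w v := by
    intro v w
    have hdF : DifferentiableAt ℂ (fderiv ℂ G) t :=
      differentiableAt_of_contDiffOn hU (hG.fderiv_of_isOpen hU (le_of_eq rfl)) ht
    have h := hdF.hasFDerivAt.clm_apply (hasFDerivAt_const v t)
    rw [h.fderiv]
    simp
  have hsymm : IsSymmSndFDerivAt ℂ G t :=
    (hG.contDiffAt (hU.mem_nhds ht)).isSymmSndFDerivAt (by simpa using two_le_infty')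
  rw [Dcoord_Dcoord_eq hU hG b a ht, Dcoord_Dcoord_eq hU hG a b ht, key, key,
    hsymm (Pi.single a 1) (Pi.single b 1)]

theorem rearrange {E : Type*} [AddCommGroup E] [Module ℂ E] {N : ℕ}
    (h : ℂ) (v : Fin N → E) (P Aa : Fin N → ℂ) (B : Fin N → Fin N → ℂ) :
    h⁻¹ • ∑ c, (P c • v c + Aa c • (h⁻¹ • ∑ e, B e c • v e))
      = ∑ c, P c • (h⁻¹ • v c) + ∑ c, (∑ e, Aa e * B c e) • ((h⁻¹) ^ 2 • v c) := by
  rw [Finset.smul_sum]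
  simp only [smul_add, Finset.sum_add_distrib]
  congr 1
  · exact Finset.sum_congr rfl fun c _ => smul_comm _ _ _
  · have step : ∀ c, h⁻¹ • (Aa c • (h⁻¹ • ∑ e, B e c • v e))
        = ∑ e, (Aa c * B e c) • ((h⁻¹) ^ 2 • v e) := by
      intro c
      rw [Finset.smul_sum, Finset.smul_sum, Finset.smul_sum]
      refine Finset.sum_congr rfl fun e _ => ?_
      simp only [smul_smul]
      congr 1
      ring
    rw [Finset.sum_congr rfl fun c _ => step c, Finset.sum_comm]
    refine Finset.sum_congr rfl fun c _ => ?_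
    rw [← Finset.sum_smul]

end PFAux

/-- Flatness `dA = 0`, commutativity and associativity `[A,A] = 0` of the connection matrix
of the Picard–Fuchs system `∂_a∂_bΨ = h⁻¹ Σ_c A^c_{ab} ∂_cΨ`. -/
theorem picardFuchs_flat_commutative_associative
    (N M : ℕ) (hN : 0 < N) (hM : 0 < M)
    (U : Set (Fin N → ℂ)) (hU : IsOpen U) (hUne : U.Nonempty)
    (V : Set ℂ) (hV : IsOpen V) (hVne : V.Nonempty) (hV0 : (0 : ℂ) ∉ V)
    (Ψ : (Fin N → ℂ) → ℂ → (Fin M → ℂ))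
    (hΨ : ContDiffOn ℂ ⊤ (fun p : (Fin N → ℂ) × ℂ => Ψ p.1 p.2) (U ×ˢ V))
    (A : Fin N → Fin N → Fin N → (Fin N → ℂ) → ℂ)
    (hA : ∀ c a b, DifferentiableOn ℂ (A c a b) U)
    (hPF : ∀ a b : Fin N, ∀ t ∈ U, ∀ h ∈ V,
      pdt (fun t' h' => pdt Ψ b t' h') a t h = h⁻¹ • ∑ c, A c a b t • pdt Ψ c t h)
    (hLI : ∀ t ∈ U, ∀ c d : Fin N → ℂ,
      (∀ h ∈ V,
        (∑ e, c e • (h⁻¹ • pdt Ψ e t h)) + (∑ e, d e • ((h⁻¹) ^ 2 • pdt Ψ e t h)) = 0) →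
      (∀ e, c e = 0) ∧ (∀ e, d e = 0)) :
    ∀ t ∈ U,
      (∀ a b c, A c a b t = A c b a t) ∧
      (∀ a b c d, pdS d (A c a b) t = pdS a (A c d b) t) ∧
      (∀ a b c d, ∑ e, A e a b t * A c d e t = ∑ e, A e d b t * A c a e t) := by
  intro t ht
  -- smoothness of `s ↦ Ψ s h` on `U` for each fixed `h ∈ V`
  have hFsm : ∀ h : ℂ, h ∈ V → ContDiffOn ℂ ∞ (fun s => Ψ s h) U := by
    intro h hh
    have h1 : ContDiffOn ℂ ∞ (fun p : (Fin N → ℂ) × ℂ => Ψ p.1 p.2) (U ×ˢ V) :=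
      hΨ.of_le le_top
    have h2 : ContDiff ℂ ∞ (fun s : Fin N → ℂ => (s, h)) := contDiff_id.prodMk contDiff_const
    exact h1.comp h2.contDiffOn fun s hs => ⟨hs, hh⟩
  -- auxiliary sum identity
  have pull : ∀ (h : ℂ) (X : Fin N → ℂ),
      (∑ e, X e • (h⁻¹ • pdt Ψ e t h)) = h⁻¹ • ∑ e, X e • pdt Ψ e t h := by
    intro h X
    rw [Finset.smul_sum]
    exact Finset.sum_congr rfl fun e _ => smul_comm _ _ _
  -- Part (i): commutativity
  have comm : ∀ a b c, A c a b t = A c b a t := by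
    intro a b c
    have harg : ∀ h ∈ V,
        (∑ e, (fun e => A e a b t - A e b a t) e • (h⁻¹ • pdt Ψ e t h))
          + (∑ e, (0 : Fin N → ℂ) e • ((h⁻¹) ^ 2 • pdt Ψ e t h)) = 0 := by
      intro h hh
      have hF := hFsm h hh
      have hsymm : pdt (fun t' h' => pdt Ψ b t' h') a t h
          = pdt (fun t' h' => pdt Ψ a t' h') b t h := by
        exact Dcoord_symm hU hF a b ht
      rw [hPF a b t ht h hh, hPF b a t ht h hh] at hsymm
      simp only [Pi.zero_apply, zero_smul, Finset.sum_const_zero, add_zero]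
      have expand : (∑ e, (A e a b t - A e b a t) • (h⁻¹ • pdt Ψ e t h))
          = (∑ e, A e a b t • (h⁻¹ • pdt Ψ e t h))
            - (∑ e, A e b a t • (h⁻¹ • pdt Ψ e t h)) := by
        rw [← Finset.sum_sub_distrib]
        exact Finset.sum_congr rfl fun e _ => sub_smul _ _ _
      rw [expand, pull, pull, hsymm, sub_self]
    obtain ⟨h1, _⟩ := hLI t ht _ _ harg
    exact sub_eq_zero.mp (h1 c)
  refine ⟨comm, ?_⟩
  have key2 : ∀ a b d : Fin N,
      (∀ c, pdS d (A c a b) t = pdS a (A c d b) t) ∧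
      (∀ c, (∑ e, A e a b t * A c d e t) = ∑ e, A e d b t * A c a e t) := by
    intro a b d
    have harg : ∀ h ∈ V,
        (∑ c, (fun c => pdS d (A c a b) t - pdS a (A c d b) t) c • (h⁻¹ • pdt Ψ c t h))
          + (∑ c, (fun c => (∑ e, A e a b t * A c d e t) - ∑ e, A e d b t * A c a e t) c
              • ((h⁻¹) ^ 2 • pdt Ψ c t h)) = 0 := by
      intro h hh
      have hF := hFsm h hh
      have hGb : ContDiffOn ℂ ∞ (Dcoord (fun s => Ψ s h) b) U := contDiffOn_Dcoord hU hF b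
      -- key computation of the third derivative
      have calc1 : ∀ x y : Fin N,
          Dcoord (Dcoord (Dcoord (fun s => Ψ s h) b) x) y t
            = h⁻¹ • ∑ c, ((pdS y (A c x b) t) • pdt Ψ c t h
                + A c x b t • (h⁻¹ • ∑ e, A e y c t • pdt Ψ e t h)) := by
        intro x y
        have hev : (fun z : ℂ => Dcoord (Dcoord (fun s => Ψ s h) b) x (Function.update t y z))
            =ᶠ[nhds (t y)] fun z => h⁻¹ • ∑ c, A c x b (Function.update t y z)
              • Dcoord (fun s => Ψ s h) c (Function.update t y z) := by
          filter_upwards [eventually_update_mem hU ht y] with z hz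
          exact hPF x b _ hz h hh
        have hR : HasDerivAt (fun z : ℂ => h⁻¹ • ∑ c, A c x b (Function.update t y z)
              • Dcoord (fun s => Ψ s h) c (Function.update t y z))
            (h⁻¹ • ∑ c, ((pdS y (A c x b) t) • Dcoord (fun s => Ψ s h) c t
              + A c x b t • Dcoord (Dcoord (fun s => Ψ s h) c) y t)) (t y) := by
          refine HasDerivAt.fun_const_smul _ ?_
          refine HasDerivAt.fun_sum fun c _ => ?_
          have hd : DifferentiableAt ℂ (A c x b) t :=
            (hA c x b).differentiableAt (hU.mem_nhds ht)
          have h0 := hasDerivAt_coord y hd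
          have hAc : HasDerivAt (fun z : ℂ => A c x b (Function.update t y z))
              (pdS y (A c x b) t) (t y) := by
            have hps : pdS y (A c x b) t = fderiv ℂ (A c x b) t (Pi.single y 1) := h0.deriv
            rw [hps]; exact h0
          have hs := hAc.fun_smul (hasDerivAt_Dcoord hU hF c y ht)
          rw [Function.update_eq_self] at hs
          convert hs using 1
          exact add_comm _ _
        have hfinal := (hR.congr_of_eventuallyEq hev).deriv
        have hL : Dcoord (Dcoord (Dcoord (fun s => Ψ s h) b) x) y t
            = deriv (fun z : ℂ =>
                Dcoord (Dcoord (fun s => Ψ s h) b) x (Function.update t y z)) (t y) := rfl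
        rw [hL, hfinal]
        congr 1
        refine Finset.sum_congr rfl fun c _ => ?_
        congr 1
        have e1 : Dcoord (Dcoord (fun s => Ψ s h) c) y t
            = h⁻¹ • ∑ e, A e y c t • pdt Ψ e t h := hPF y c t ht h hh
        rw [e1]
      -- symmetry of the two outer derivatives
      have hsym3 : Dcoord (Dcoord (Dcoord (fun s => Ψ s h) b) a) d t
          = Dcoord (Dcoord (Dcoord (fun s => Ψ s h) b) d) a t :=
        Dcoord_symm hU hGb d a ht
      rw [calc1 a d, calc1 d a] at hsym3
      rw [rearrange, rearrange] at hsym3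
      simp only [sub_smul, Finset.sum_sub_distrib]
      rw [sub_add_sub_comm, hsym3, sub_self]
    obtain ⟨h1, h2⟩ := hLI t ht _ _ harg
    exact ⟨fun c => sub_eq_zero.mp (h1 c), fun c => sub_eq_zero.mp (h2 c)⟩
  exact ⟨fun a b c d => (key2 a b d).1 c, fun a b c d => (key2 a b d).2 c⟩
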